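/- arXiv:2306.10154 — 2 statements merged into one kernel-verified Lean document; each statement's English description precedes it below -/
import Mathlib

section
/- Let a_1,…,a_m and b_1,…,b_t be positive integers such that g = p^A(a_1|…|a_m|1 / b_1|…|b_t) is a Frobenius type-A seaweed (its meander is a single path) with spectrum S, and let r ≥ 1 be an integer. Then: (1) g' = p^A(a_1|…|a_m|2|…|2 / b_1|…|b_t|2|…|2|1), with r trailing 2's in the top composition and r−1 trailing 2's followed by a 1 in the bottom composition, is a Frobenius type-A seaweed with spectrum S ∪ {0 with multiplicity 2r−1, 1 with multiplicity 2r−1}; and (2) g'' = p^A(a_1|…|a_m|2|…|2|1 / b_1|…|b_t|2|…|2), with r trailing 2's followed by a 1 in the top composition and r trailing 2's in the bottom composition, is a Frobenius type-A seaweed with spectrum S ∪ {0 with multiplicity 2r, 1 with multiplicity 2r}. -/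
namespace Seaweed

/-- Positions `i` and `j` (1-indexed) are joined by an arc of the composition `c`:
they lie in the same block of `c` and are placed symmetrically within it. -/
def blockPair (c : List ℕ) (i j : ℕ) : Prop :=
  ∃ k, k < c.length ∧ (c.take k).sum < i ∧ (c.take k).sum < j ∧
    i + j = 2 * (c.take k).sum + c.getD k 0 + 1 ∧ i ≠ j

lemma blockPair_symm {c : List ℕ} {i j : ℕ} (h : blockPair c i j) : blockPair c j i := by
  obtain ⟨k, hk, hi, hj, hsum, hne⟩ := h
  exact ⟨k, hk, hj, hi, by omega, hne.symm⟩

/-- The meander `M(a|b)` of the pair of compositions `(a, b)`, as a simple graph on `ℕ`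
(positions `1, …, a.sum` carry the meander; all other naturals are isolated).
Top edges come from `a`, bottom edges from `b`. -/
def meander (a b : List ℕ) : SimpleGraph ℕ where
  Adj i j := blockPair a i j ∨ blockPair b i j
  symm := ⟨fun _ _ h => h.imp blockPair_symm blockPair_symm⟩
  loopless := ⟨by
    rintro i (⟨k, _, _, _, _, hne⟩ | ⟨k, _, _, _, _, hne⟩) <;> exact hne rfl⟩

/-- The directed-edge relation of the oriented meander: top edges are oriented
right-to-left, bottom edges left-to-right. -/
def dirEdge (a b : List ℕ) (x y : ℕ) : Prop :=
  (blockPair a x y ∧ y < x) ∨ (blockPair b x y ∧ x < y)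

open scoped Classical in
/-- The weight of a walk in the oriented meander: each step taken in agreement with
the orientation counts `+1`, each step against it counts `-1`. -/
noncomputable def walkWeight (a b : List ℕ) {i j : ℕ} (w : (meander a b).Walk i j) : ℤ :=
  (w.darts.map fun d => if dirEdge a b d.toProd.1 d.toProd.2 then (1 : ℤ) else -1).sum

open scoped Classical in
/-- `w(P_{i,j}(a|b))`: the weight of the (unique, when the meander consists of a single
path) path from `v_i` to `v_j` in the oriented meander. -/
noncomputable def pathWeight (a b : List ℕ) (i j : ℕ) : ℤ :=
  if h : ∃ p : (meander a b).Walk i j, p.IsPath then walkWeight a b h.choose else 0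

/-- The meander of `(a, b)` consists of a single path: it has no cycles (in particular no
doubled top/bottom edge, which would be a 2-cycle) and all positions `1, …, n` are
connected.  This is exactly the condition for `p^A(a|b)` to be Frobenius. -/
def IsSinglePath (a b : List ℕ) : Prop :=
  (meander a b).IsAcyclic ∧
  (∀ i j, i ∈ Finset.Icc 1 a.sum → j ∈ Finset.Icc 1 a.sum → (meander a b).Reachable i j) ∧
  ∀ i j, ¬(blockPair a i j ∧ blockPair b i j)

/-- `i` and `j` lie in the same block of the composition `c`. -/
def sameBlock (c : List ℕ) (i j : ℕ) : Prop :=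
  ∃ k, k < c.length ∧ (c.take k).sum < i ∧ i ≤ (c.take k).sum + c.getD k 0 ∧
    (c.take k).sum < j ∧ j ≤ (c.take k).sum + c.getD k 0

/-- The matrix position `(i, j)` belongs to the seaweed `p^A(a|b)`. -/
def seaweedPos (a b : List ℕ) (i j : ℕ) : Prop :=
  (j ≤ i ∧ sameBlock a i j) ∨ (i ≤ j ∧ sameBlock b i j)

open scoped Classical in
/-- The block of the spectrum matrix of `p^A(a|b)` on rows `R` and columns `C`:
the multiset of weights `w(P_{i,j})` over positions `(i,j)` of the seaweed with
`i ∈ R`, `j ∈ C`. -/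
noncomputable def spectrumBlock (a b : List ℕ) (R C : Finset ℕ) : Multiset ℤ :=
  ((R ×ˢ C).filter fun p => seaweedPos a b p.1 p.2).val.map fun p => pathWeight a b p.1 p.2

/-- The multiset of all values of the extended spectrum matrix of `p^A(a|b)`:
the weights `w(P_{i,j})` over all pairs `1 ≤ i, j ≤ n`. -/
noncomputable def extendedValues (a b : List ℕ) : Multiset ℤ :=
  (Finset.Icc 1 a.sum ×ˢ Finset.Icc 1 a.sum).val.map fun p => pathWeight a b p.1 p.2

/-- The spectrum of a Frobenius type-A seaweed `p^A(a|b)`: the multiset of entries of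
its spectrum matrix, with one copy of `0` removed. -/
noncomputable def spectrum (a b : List ℕ) : Multiset ℤ :=
  spectrumBlock a b (Finset.Icc 1 a.sum) (Finset.Icc 1 a.sum) - {0}

/-- The extended spectrum: all entries of the extended spectrum matrix, with one copy
of `0` removed. -/
noncomputable def extendedSpectrum (a b : List ℕ) : Multiset ℤ :=
  extendedValues a b - {0}

/-- Listing the distinct values of the multiset `S` in increasing order, the
corresponding sequence of multiplicities is log-concave. -/
def HasLogConcaveSpectrum (S : Multiset ℤ) : Prop :=
  ∀ i : ℕ, 0 < i → i + 1 < (S.toFinset.sort (· ≤ ·)).length →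
    S.count ((S.toFinset.sort (· ≤ ·)).getD (i - 1) 0) *
      S.count ((S.toFinset.sort (· ≤ ·)).getD (i + 1) 0) ≤
      S.count ((S.toFinset.sort (· ≤ ·)).getD i 0) ^ 2

/-! ### Basic lemmas about `blockPair` and `sameBlock` -/

lemma take_sum_add_le {c : List ℕ} {k : ℕ} (hk : k < c.length) :
    (c.take k).sum + c.getD k 0 ≤ c.sum := by
  have h1 := List.sum_take_succ c k hk
  have h2 := List.getD_eq_getElem c 0 hk
  have h3 : (c.take (k + 1)).sum + (c.drop (k + 1)).sum = c.sum := by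
    rw [← List.sum_append, List.take_append_drop]
  omega

lemma blockPair_bounds {c : List ℕ} {i j : ℕ} (h : blockPair c i j) :
    1 ≤ i ∧ i ≤ c.sum ∧ 1 ≤ j ∧ j ≤ c.sum := by
  obtain ⟨k, hk, hi, hj, hsum, _⟩ := h
  have := take_sum_add_le hk
  omega

lemma getD_append_lt {c : List ℕ} {x : ℕ} {k : ℕ} (hk : k < c.length) :
    (c ++ [x]).getD k 0 = c.getD k 0 := by
  rw [List.getD_eq_getElem c 0 hk,
    List.getD_eq_getElem (c ++ [x]) 0 (by simp; omega)]
  exact List.getElem_append_left hk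

lemma getD_append_self {c : List ℕ} {x : ℕ} :
    (c ++ [x]).getD c.length 0 = x := by
  rw [List.getD_eq_getElem (c ++ [x]) 0 (by simp)]
  simp

lemma blockPair_append {c : List ℕ} {x i j : ℕ} :
    blockPair (c ++ [x]) i j ↔ blockPair c i j ∨
      (c.sum < i ∧ c.sum < j ∧ i + j = 2 * c.sum + x + 1 ∧ i ≠ j) := by
  constructor
  · rintro ⟨k, hk, hi, hj, hsum, hne⟩
    rw [List.length_append, List.length_singleton] at hk
    rcases Nat.lt_or_ge k c.length with hk' | hk'
    · left
      rw [List.take_append_of_le_length hk'.le] at hi hj hsum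
      rw [getD_append_lt hk'] at hsum
      exact ⟨k, hk', hi, hj, hsum, hne⟩
    · right
      have hkeq : k = c.length := by omega
      subst hkeq
      rw [List.take_append_of_le_length le_rfl, List.take_length] at hi hj hsum
      rw [getD_append_self] at hsum
      exact ⟨hi, hj, hsum, hne⟩
  · rintro (⟨k, hk, hi, hj, hsum, hne⟩ | ⟨hi, hj, hsum, hne⟩)
    · refine ⟨k, by simp; omega, ?_, ?_, ?_, hne⟩
      · rw [List.take_append_of_le_length hk.le]; exact hi
      · rw [List.take_append_of_le_length hk.le]; exact hj
      · rw [List.take_append_of_le_length hk.le, getD_append_lt hk]; exact hsum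
    · refine ⟨c.length, by simp, ?_, ?_, ?_, hne⟩
      · rw [List.take_append_of_le_length le_rfl, List.take_length]; exact hi
      · rw [List.take_append_of_le_length le_rfl, List.take_length]; exact hj
      · rw [List.take_append_of_le_length le_rfl, List.take_length, getD_append_self]
        exact hsum

lemma blockPair_append_one {c : List ℕ} {i j : ℕ} :
    blockPair (c ++ [1]) i j ↔ blockPair c i j := by
  rw [blockPair_append]
  constructor
  · rintro (h | ⟨hi, hj, hsum, hne⟩)
    · exact h
    · omega
  · exact Or.inl

lemma blockPair_append_two {c : List ℕ} {i j : ℕ} :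
    blockPair (c ++ [2]) i j ↔ blockPair c i j ∨
      ((i, j) = (c.sum + 1, c.sum + 2) ∨ (i, j) = (c.sum + 2, c.sum + 1)) := by
  rw [blockPair_append]
  constructor
  · rintro (h | ⟨hi, hj, hsum, hne⟩)
    · exact Or.inl h
    · right
      rcases Nat.lt_or_ge i j with h' | h'
      · left; simp only [Prod.mk.injEq]; omega
      · right; simp only [Prod.mk.injEq]; omega
  · rintro (h | (h | h))
    · exact Or.inl h
    · right
      simp only [Prod.mk.injEq] at h
      omega
    · right
      simp only [Prod.mk.injEq] at h
      omega

lemma sameBlock_bounds {c : List ℕ} {i j : ℕ} (h : sameBlock c i j) :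
    1 ≤ i ∧ i ≤ c.sum ∧ 1 ≤ j ∧ j ≤ c.sum := by
  obtain ⟨k, hk, hi1, hi2, hj1, hj2⟩ := h
  have := take_sum_add_le hk
  omega

lemma sameBlock_append {c : List ℕ} {x i j : ℕ} :
    sameBlock (c ++ [x]) i j ↔ sameBlock c i j ∨
      (c.sum < i ∧ i ≤ c.sum + x ∧ c.sum < j ∧ j ≤ c.sum + x) := by
  constructor
  · rintro ⟨k, hk, hi1, hi2, hj1, hj2⟩
    rw [List.length_append, List.length_singleton] at hk
    rcases Nat.lt_or_ge k c.length with hk' | hk'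
    · left
      rw [List.take_append_of_le_length hk'.le] at hi1 hi2 hj1 hj2
      rw [getD_append_lt hk'] at hi2 hj2
      exact ⟨k, hk', hi1, hi2, hj1, hj2⟩
    · right
      have hkeq : k = c.length := by omega
      subst hkeq
      rw [List.take_append_of_le_length le_rfl, List.take_length] at hi1 hi2 hj1 hj2
      rw [getD_append_self] at hi2 hj2
      exact ⟨hi1, hi2, hj1, hj2⟩
  · rintro (⟨k, hk, hi1, hi2, hj1, hj2⟩ | ⟨hi1, hi2, hj1, hj2⟩)
    · refine ⟨k, by simp; omega, ?_, ?_, ?_, ?_⟩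
      · rw [List.take_append_of_le_length hk.le]; exact hi1
      · rw [List.take_append_of_le_length hk.le, getD_append_lt hk]; exact hi2
      · rw [List.take_append_of_le_length hk.le]; exact hj1
      · rw [List.take_append_of_le_length hk.le, getD_append_lt hk]; exact hj2
    · refine ⟨c.length, by simp, ?_, ?_, ?_, ?_⟩
      · rw [List.take_append_of_le_length le_rfl, List.take_length]; exact hi1
      · rw [List.take_append_of_le_length le_rfl, List.take_length, getD_append_self]
        exact hi2
      · rw [List.take_append_of_le_length le_rfl, List.take_length]; exact hj1
      · rw [List.take_append_of_le_length le_rfl, List.take_length, getD_append_self]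
        exact hj2
/-! ### Walk weights and path weights -/

open scoped Classical in
lemma walkWeight_nil {a b : List ℕ} {i : ℕ} :
    walkWeight a b (SimpleGraph.Walk.nil : (meander a b).Walk i i) = 0 := rfl

open scoped Classical in
lemma walkWeight_cons {a b : List ℕ} {i j k : ℕ} (h : (meander a b).Adj i j)
    (p : (meander a b).Walk j k) :
    walkWeight a b (SimpleGraph.Walk.cons h p) =
      (if dirEdge a b i j then (1 : ℤ) else -1) + walkWeight a b p := by
  simp [walkWeight]

lemma pathWeight_eq_of_isPath {a b : List ℕ} (hacyc : (meander a b).IsAcyclic) {i j : ℕ}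
    (p : (meander a b).Walk i j) (hp : p.IsPath) :
    pathWeight a b i j = walkWeight a b p := by
  have h : ∃ q : (meander a b).Walk i j, q.IsPath := ⟨p, hp⟩
  rw [pathWeight, dif_pos h]
  congr 1
  have := hacyc.path_unique ⟨h.choose, h.choose_spec⟩ ⟨p, hp⟩
  exact congrArg Subtype.val this

lemma pathWeight_self {a b : List ℕ} (hacyc : (meander a b).IsAcyclic) (i : ℕ) :
    pathWeight a b i i = 0 :=
  (pathWeight_eq_of_isPath hacyc SimpleGraph.Walk.nil SimpleGraph.Walk.IsPath.nil).trans
    walkWeight_nil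

open scoped Classical in
lemma walkWeight_mapLe {a b a' b' : List ℕ}
    (hle : meander a b ≤ meander a' b')
    (hcompat : ∀ x y, (meander a b).Adj x y → (dirEdge a' b' x y ↔ dirEdge a b x y))
    {i j : ℕ} (p : (meander a b).Walk i j) :
    walkWeight a' b' (p.mapLe hle) = walkWeight a b p := by
  induction p with
  | nil => rfl
  | cons h p ih =>
    rename_i u v w
    rw [SimpleGraph.Walk.mapLe, SimpleGraph.Walk.map_cons]
    rw [walkWeight_cons, walkWeight_cons]
    rw [← SimpleGraph.Walk.mapLe, ih]
    congr 1
    have hfu : (SimpleGraph.Hom.ofLE hle) u = u := rfl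
    have hfv : (SimpleGraph.Hom.ofLE hle) v = v := rfl
    simp only [hfu, hfv]
    by_cases hd : dirEdge a b u v
    · rw [if_pos hd, if_pos ((hcompat _ _ h).2 hd)]
    · rw [if_neg hd, if_neg (fun hc => hd ((hcompat _ _ h).1 hc))]
/-! ### The core leaf-extension lemma -/

lemma meander_adj {a b : List ℕ} {i j : ℕ} :
    (meander a b).Adj i j ↔ blockPair a i j ∨ blockPair b i j := Iff.rfl

lemma core {a b a' b' : List ℕ} {n p1 q1 : ℕ}
    (hn : 1 ≤ n)
    (hsa : a.sum = n) (hsb : b.sum = n) (hsa' : a'.sum = n + 1)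
    (hOld : ∀ x y, x ≤ n → y ≤ n →
      ((blockPair a' x y ↔ blockPair a x y) ∧ (blockPair b' x y ↔ blockPair b x y)))
    (hAdj : ∀ x y, (blockPair a' x y ∨ blockPair b' x y) ↔
      (blockPair a x y ∨ blockPair b x y) ∨ ((x, y) = (n, n + 1) ∨ (x, y) = (n + 1, n)))
    (hnp : (p1 = n ∧ q1 = n + 1) ∨ (p1 = n + 1 ∧ q1 = n))
    (hpos : ∀ i j, 1 ≤ i → i ≤ n + 1 → 1 ≤ j → j ≤ n + 1 →
      (seaweedPos a' b' i j ↔ (i ≤ n ∧ j ≤ n ∧ seaweedPos a b i j) ∨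
        (i, j) = (p1, q1) ∨ (i, j) = (n + 1, n + 1)))
    (hdir : dirEdge a' b' p1 q1)
    (hdiag : seaweedPos a b n n)
    (hex : ∀ i j, ¬(blockPair a' i j ∧ blockPair b' i j))
    (hpath : IsSinglePath a b) :
    IsSinglePath a' b' ∧ spectrum a' b' = 0 ::ₘ 1 ::ₘ spectrum a b := by
  classical
  have hGbnd : ∀ x y, (meander a b).Adj x y → x ≤ n ∧ y ≤ n ∧ 1 ≤ x ∧ 1 ≤ y := by
    rintro x y (h | h)
    · have := blockPair_bounds h; omega
    · have := blockPair_bounds h; omega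
  have hle : meander a b ≤ meander a' b' := fun {x y} h => (hAdj x y).2 (Or.inl h)
  have hadj_new : (meander a' b').Adj n (n + 1) := (hAdj n (n + 1)).2 (Or.inr (Or.inl rfl))
  have hnb : ∀ w, (meander a' b').Adj (n + 1) w → w = n := by
    intro w h
    rcases (hAdj _ _).1 h with h' | (h' | h')
    · have := hGbnd _ _ h'; omega
    · simp only [Prod.mk.injEq] at h'; omega
    · simp only [Prod.mk.injEq] at h'; omega
  have hacyc : (meander a b).IsAcyclic := hpath.1
  -- no cycle through n+1
  have key : ∀ c' : (meander a' b').Walk (n + 1) (n + 1), ¬c'.IsCycle := by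
    intro c' hc'
    obtain ⟨w, h, p, hdec⟩ := SimpleGraph.Walk.not_nil_iff.1 hc'.not_nil
    have hw : w = n := hnb w h
    subst w
    subst hdec
    obtain ⟨w2, h2, q, hq⟩ :=
      SimpleGraph.Walk.exists_eq_cons_of_ne (by omega : n + 1 ≠ n) p.reverse
    have hw2 : w2 = n := hnb w2 h2
    subst w2
    have hp : p = q.reverse.append (SimpleGraph.Walk.cons h2.symm SimpleGraph.Walk.nil) := by
      have := congrArg SimpleGraph.Walk.reverse hq
      rwa [SimpleGraph.Walk.reverse_reverse, SimpleGraph.Walk.reverse_cons] at this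
    have hnodup : p.support.Nodup := by
      have := hc'.support_nodup
      rwa [SimpleGraph.Walk.support_cons, List.tail_cons] at this
    have hsupp : p.support = q.reverse.support ++ [n + 1] := by
      rw [hp, SimpleGraph.Walk.support_append]
      simp
    have hqnodup : q.reverse.support.Nodup := by
      rw [hsupp] at hnodup
      exact hnodup.of_append_left
    have hqnil : q.reverse = SimpleGraph.Walk.nil :=
      SimpleGraph.Walk.isPath_iff_eq_nil.1 (SimpleGraph.Walk.IsPath.mk' hqnodup)
    have hlen : p.length = 1 := by
      rw [hp, hqnil]
      simp
    have h3 := hc'.three_le_length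
    rw [SimpleGraph.Walk.length_cons, hlen] at h3
    omega
  have hacyc' : (meander a' b').IsAcyclic := by
    intro u c hc
    by_cases hmem : (n + 1) ∈ c.support
    · exact key _ (hc.rotate hmem)
    · have hedges : ∀ e ∈ c.edges, e ∈ (meander a b).edgeSet := by
        intro e he
        induction e using Sym2.ind with
        | _ x y =>
          have hx : x ∈ c.support := SimpleGraph.Walk.fst_mem_support_of_mem_edges c he
          have hy : y ∈ c.support := SimpleGraph.Walk.snd_mem_support_of_mem_edges c he
          have hadj : (meander a' b').Adj x y := SimpleGraph.Walk.adj_of_mem_edges c he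
          rcases (hAdj x y).1 hadj with h' | (h' | h')
          · exact h'
          · simp only [Prod.mk.injEq] at h'
            exact absurd (h'.2 ▸ hy) hmem
          · simp only [Prod.mk.injEq] at h'
            exact absurd (h'.1 ▸ hx) hmem
      exact hacyc _ (hc.transfer hedges)
  have hro : ∀ i j, 1 ≤ i → i ≤ n → 1 ≤ j → j ≤ n → (meander a b).Reachable i j := by
    intro i j h1 h2 h3 h4
    exact hpath.2.1 i j (Finset.mem_Icc.2 ⟨h1, by omega⟩) (Finset.mem_Icc.2 ⟨h3, by omega⟩)
  have hreach : ∀ i j, i ∈ Finset.Icc 1 a'.sum → j ∈ Finset.Icc 1 a'.sum →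
      (meander a' b').Reachable i j := by
    rw [hsa']
    intro i j hi hj
    simp only [Finset.mem_Icc] at hi hj
    have hr1 : ∀ k, 1 ≤ k → k ≤ n + 1 → (meander a' b').Reachable k n := by
      intro k hk1 hk2
      rcases Nat.lt_or_ge k (n + 1) with hk | hk
      · exact (hro k n hk1 (by omega) hn le_rfl).mono hle
      · have : k = n + 1 := by omega
        subst this
        exact hadj_new.symm.reachable
    exact (hr1 i hi.1 hi.2).trans (hr1 j hj.1 hj.2).symm
  -- weights
  have hcompat : ∀ x y, (meander a b).Adj x y → (dirEdge a' b' x y ↔ dirEdge a b x y) := by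
    intro x y h
    obtain ⟨hx, hy, _, _⟩ := hGbnd x y h
    obtain ⟨hx2, hy2, _, _⟩ := hGbnd y x h.symm
    unfold dirEdge
    rw [(hOld x y hx hy).1, (hOld x y hx hy).2]
  have hweight_old : ∀ i j, 1 ≤ i → i ≤ n → 1 ≤ j → j ≤ n →
      pathWeight a' b' i j = pathWeight a b i j := by
    intro i j hi1 hi2 hj1 hj2
    obtain ⟨w⟩ := hro i j hi1 hi2 hj1 hj2
    let p := w.toPath
    rw [pathWeight_eq_of_isPath hacyc p.val p.property,
      pathWeight_eq_of_isPath hacyc' (p.val.mapLe hle) (p.property.mapLe hle),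
      walkWeight_mapLe hle hcompat]
  have hwnew : pathWeight a' b' p1 q1 = 1 := by
    have hadj : (meander a' b').Adj p1 q1 := by
      rcases hnp with ⟨h1, h2⟩ | ⟨h1, h2⟩ <;> subst h1 <;> subst h2
      · exact hadj_new
      · exact hadj_new.symm
    have hne : p1 ≠ q1 := by rcases hnp with ⟨h1, h2⟩ | ⟨h1, h2⟩ <;> omega
    have hp : (SimpleGraph.Walk.cons hadj SimpleGraph.Walk.nil).IsPath := by
      rw [SimpleGraph.Walk.cons_isPath_iff]
      refine ⟨SimpleGraph.Walk.IsPath.nil, ?_⟩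
      simp [hne]
    rw [pathWeight_eq_of_isPath hacyc' _ hp, walkWeight_cons, walkWeight_nil, if_pos hdir]
    norm_num
  have hw0 : pathWeight a' b' (n + 1) (n + 1) = 0 := pathWeight_self hacyc' _
  -- filter decomposition
  have hfilter :
      (Finset.Icc 1 (n + 1) ×ˢ Finset.Icc 1 (n + 1)).filter
          (fun p => seaweedPos a' b' p.1 p.2)
        = insert (p1, q1) (insert (n + 1, n + 1)
            ((Finset.Icc 1 n ×ˢ Finset.Icc 1 n).filter (fun p => seaweedPos a b p.1 p.2))) := by
    ext ⟨i, j⟩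
    simp only [Finset.mem_filter, Finset.mem_product, Finset.mem_Icc, Finset.mem_insert,
      Prod.mk.injEq]
    constructor
    · rintro ⟨⟨⟨hi1, hi2⟩, hj1, hj2⟩, hsp⟩
      rcases (hpos i j hi1 hi2 hj1 hj2).1 hsp with ⟨h1, h2, h3⟩ | h | h
      · right; right; exact ⟨⟨⟨hi1, h1⟩, hj1, h2⟩, h3⟩
      · left; simpa using h
      · right; left; simpa using h
    · rintro (⟨h1, h2⟩ | ⟨h1, h2⟩ | ⟨⟨⟨hi1, hi2⟩, hj1, hj2⟩, hsp⟩)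
      · have hb1 : 1 ≤ i ∧ i ≤ n + 1 ∧ 1 ≤ j ∧ j ≤ n + 1 := by
          rcases hnp with ⟨ha1, ha2⟩ | ⟨ha1, ha2⟩ <;> omega
        exact ⟨⟨⟨hb1.1, hb1.2.1⟩, hb1.2.2.1, hb1.2.2.2⟩,
          (hpos _ _ hb1.1 hb1.2.1 hb1.2.2.1 hb1.2.2.2).2
            (Or.inr (Or.inl (by simp [Prod.ext_iff, h1, h2])))⟩
      · have hb1 : 1 ≤ i ∧ i ≤ n + 1 ∧ 1 ≤ j ∧ j ≤ n + 1 := by omega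
        exact ⟨⟨⟨hb1.1, hb1.2.1⟩, hb1.2.2.1, hb1.2.2.2⟩,
          (hpos _ _ hb1.1 hb1.2.1 hb1.2.2.1 hb1.2.2.2).2
            (Or.inr (Or.inr (by simp [Prod.ext_iff, h1, h2])))⟩
      · exact ⟨⟨⟨hi1, by omega⟩, hj1, by omega⟩,
          (hpos i j hi1 (by omega) hj1 (by omega)).2 (Or.inl ⟨hi2, hj2, hsp⟩)⟩
  have hnotmem1 : ((n + 1, n + 1) : ℕ × ℕ) ∉
      (Finset.Icc 1 n ×ˢ Finset.Icc 1 n).filter (fun p => seaweedPos a b p.1 p.2) := by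
    simp only [Finset.mem_filter, Finset.mem_product, Finset.mem_Icc]
    push_neg
    intro h
    omega
  have hnotmem2 : ((p1, q1) : ℕ × ℕ) ∉ insert ((n + 1, n + 1) : ℕ × ℕ)
      ((Finset.Icc 1 n ×ˢ Finset.Icc 1 n).filter (fun p => seaweedPos a b p.1 p.2)) := by
    simp only [Finset.mem_insert, Finset.mem_filter, Finset.mem_product, Finset.mem_Icc,
      Prod.mk.injEq]
    push_neg
    constructor
    · intro h1
      rcases hnp with ⟨ha1, ha2⟩ | ⟨ha1, ha2⟩ <;> omega
    · intro h
      exfalso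
      rcases hnp with ⟨ha1, ha2⟩ | ⟨ha1, ha2⟩ <;> omega
  have hblock : spectrumBlock a' b' (Finset.Icc 1 (n + 1)) (Finset.Icc 1 (n + 1)) =
      1 ::ₘ 0 ::ₘ spectrumBlock a b (Finset.Icc 1 n) (Finset.Icc 1 n) := by
    unfold spectrumBlock
    rw [hfilter, Finset.insert_val_of_notMem hnotmem2, Finset.insert_val_of_notMem hnotmem1,
      Multiset.map_cons, Multiset.map_cons, hwnew, hw0]
    congr 1
    congr 1
    apply Multiset.map_congr rfl
    intro x hx
    simp only [Finset.mem_val, Finset.mem_filter, Finset.mem_product, Finset.mem_Icc] at hx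
    exact hweight_old x.1 x.2 hx.1.1.1 hx.1.1.2 hx.1.2.1 hx.1.2.2
  have h0mem : (0 : ℤ) ∈ spectrumBlock a b (Finset.Icc 1 n) (Finset.Icc 1 n) := by
    unfold spectrumBlock
    rw [Multiset.mem_map]
    refine ⟨(n, n), ?_, pathWeight_self hacyc n⟩
    simp only [Finset.mem_val, Finset.mem_filter, Finset.mem_product, Finset.mem_Icc]
    exact ⟨⟨⟨hn, le_rfl⟩, hn, le_rfl⟩, hdiag⟩
  refine ⟨⟨hacyc', hreach, hex⟩, ?_⟩
  unfold spectrum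
  rw [hsa', hsa, hblock, Multiset.sub_singleton, Multiset.sub_singleton,
    Multiset.erase_cons_tail _ (by norm_num), Multiset.erase_cons_head]
  conv_lhs => rw [← Multiset.cons_erase h0mem]
  rw [Multiset.cons_swap]
/-! ### The two step lemmas -/

lemma stepTop {A B : List ℕ} (hsum : (A ++ [1]).sum = B.sum)
    (hpath : IsSinglePath (A ++ [1]) B) :
    IsSinglePath (A ++ [2]) (B ++ [1]) ∧
      spectrum (A ++ [2]) (B ++ [1]) = 0 ::ₘ 1 ::ₘ spectrum (A ++ [1]) B := by
  have hA : A.sum + 1 = B.sum := by simpa using hsum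
  set n := B.sum with hndef
  refine core (n := n) (p1 := n + 1) (q1 := n) (by omega) (by simpa using hsum) rfl
    (by simp; omega) ?hOld ?hAdj (Or.inr ⟨rfl, rfl⟩) ?hpos ?hdir ?hdiag ?hex hpath
  case hOld =>
    intro x y hx hy
    constructor
    · rw [blockPair_append_two, blockPair_append_one]
      constructor
      · rintro (h | (h | h))
        · exact h
        · simp only [Prod.mk.injEq] at h; omega
        · simp only [Prod.mk.injEq] at h; omega
      · exact Or.inl
    · rw [blockPair_append_one]
  case hAdj =>
    intro x y
    rw [blockPair_append_two, blockPair_append_one, blockPair_append_one]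
    have e1 : A.sum + 1 = n := hA
    have e2 : A.sum + 2 = n + 1 := by omega
    rw [e1, e2]
    tauto
  case hpos =>
    intro i j hi1 hi2 hj1 hj2
    unfold seaweedPos
    simp only [sameBlock_append, Prod.mk.injEq]
    constructor
    · rintro (⟨hij, h | h⟩ | ⟨hij, h | h⟩)
      · have := sameBlock_bounds h
        exact Or.inl ⟨by omega, by omega, Or.inl ⟨hij, Or.inl h⟩⟩
      · rcases Nat.lt_or_ge i (n + 1) with hc | hc
        · rcases Nat.lt_or_ge j (n + 1) with hc2 | hc2
          · exact Or.inl ⟨by omega, by omega, Or.inl ⟨hij, Or.inr (by omega)⟩⟩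
          · omega
        · rcases Nat.lt_or_ge j (n + 1) with hc2 | hc2
          · exact Or.inr (Or.inl ⟨by omega, by omega⟩)
          · exact Or.inr (Or.inr ⟨by omega, by omega⟩)
      · have := sameBlock_bounds h
        exact Or.inl ⟨by omega, by omega, Or.inr ⟨hij, h⟩⟩
      · exact Or.inr (Or.inr ⟨by omega, by omega⟩)
    · rintro (⟨hi, hj, ⟨hij, h | h⟩ | ⟨hij, h⟩⟩ | ⟨h1, h2⟩ | ⟨h1, h2⟩)
      · exact Or.inl ⟨hij, Or.inl h⟩
      · exact Or.inl ⟨hij, Or.inr (by omega)⟩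
      · exact Or.inr ⟨hij, Or.inl h⟩
      · exact Or.inl ⟨by omega, Or.inr (by omega)⟩
      · exact Or.inr ⟨by omega, Or.inr (by omega)⟩
  case hdir =>
    left
    refine ⟨blockPair_append_two.2 (Or.inr (Or.inr ?_)), by omega⟩
    simp only [Prod.mk.injEq]
    omega
  case hdiag =>
    left
    refine ⟨le_rfl, sameBlock_append.2 (Or.inr ?_)⟩
    omega
  case hex =>
    rintro i j ⟨h1, h2⟩
    rw [blockPair_append_one] at h2
    have hb := blockPair_bounds h2
    rcases blockPair_append_two.1 h1 with h1' | h1'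
    · exact hpath.2.2 i j ⟨blockPair_append_one.2 h1', h2⟩
    · simp only [Prod.mk.injEq] at h1'
      omega

lemma stepBot {A B : List ℕ} (hsum : A.sum = (B ++ [1]).sum)
    (hpath : IsSinglePath A (B ++ [1])) :
    IsSinglePath (A ++ [1]) (B ++ [2]) ∧
      spectrum (A ++ [1]) (B ++ [2]) = 0 ::ₘ 1 ::ₘ spectrum A (B ++ [1]) := by
  have hB : B.sum + 1 = A.sum := by simpa using hsum.symm
  set n := A.sum with hndef
  refine core (n := n) (p1 := n) (q1 := n + 1) (by omega) rfl (by simpa using hsum.symm)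
    (by simp [hndef]) ?hOld ?hAdj (Or.inl ⟨rfl, rfl⟩) ?hpos ?hdir ?hdiag ?hex hpath
  case hOld =>
    intro x y hx hy
    constructor
    · rw [blockPair_append_one]
    · rw [blockPair_append_two, blockPair_append_one]
      constructor
      · rintro (h | (h | h))
        · exact h
        · simp only [Prod.mk.injEq] at h; omega
        · simp only [Prod.mk.injEq] at h; omega
      · exact Or.inl
  case hAdj =>
    intro x y
    rw [blockPair_append_two, blockPair_append_one, blockPair_append_one]
    have e1 : B.sum + 1 = n := hB
    have e2 : B.sum + 2 = n + 1 := by omega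
    rw [e1, e2]
    tauto
  case hpos =>
    intro i j hi1 hi2 hj1 hj2
    unfold seaweedPos
    simp only [sameBlock_append, Prod.mk.injEq]
    constructor
    · rintro (⟨hij, h | h⟩ | ⟨hij, h | h⟩)
      · have := sameBlock_bounds h
        exact Or.inl ⟨by omega, by omega, Or.inl ⟨hij, h⟩⟩
      · exact Or.inr (Or.inr ⟨by omega, by omega⟩)
      · have := sameBlock_bounds h
        exact Or.inl ⟨by omega, by omega, Or.inr ⟨hij, Or.inl h⟩⟩
      · rcases Nat.lt_or_ge j (n + 1) with hc | hc
        · exact Or.inl ⟨by omega, by omega, Or.inr ⟨hij, Or.inr (by omega)⟩⟩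
        · rcases Nat.lt_or_ge i (n + 1) with hc2 | hc2
          · exact Or.inr (Or.inl ⟨by omega, by omega⟩)
          · exact Or.inr (Or.inr ⟨by omega, by omega⟩)
    · rintro (⟨hi, hj, ⟨hij, h⟩ | ⟨hij, h | h⟩⟩ | ⟨h1, h2⟩ | ⟨h1, h2⟩)
      · exact Or.inl ⟨hij, Or.inl h⟩
      · exact Or.inr ⟨hij, Or.inl h⟩
      · exact Or.inr ⟨hij, Or.inr (by omega)⟩
      · exact Or.inr ⟨by omega, Or.inr (by omega)⟩
      · exact Or.inr ⟨by omega, Or.inr (by omega)⟩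
  case hdir =>
    right
    refine ⟨blockPair_append_two.2 (Or.inr (Or.inl ?_)), by omega⟩
    simp only [Prod.mk.injEq]
    omega
  case hdiag =>
    right
    refine ⟨le_rfl, sameBlock_append.2 (Or.inr ?_)⟩
    omega
  case hex =>
    rintro i j ⟨h1, h2⟩
    rw [blockPair_append_one] at h1
    have hb := blockPair_bounds h1
    rcases blockPair_append_two.1 h2 with h2' | h2'
    · exact hpath.2.2 i j ⟨h1, blockPair_append_one.2 h2'⟩
    · simp only [Prod.mk.injEq] at h2'
      omega
/-! ### Accumulation and the main theorem -/

lemma acc_step (S : Multiset ℤ) (k : ℕ) :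
    (0 : ℤ) ::ₘ 1 ::ₘ (S + Multiset.replicate k (0 : ℤ) + Multiset.replicate k (1 : ℤ)) =
      S + Multiset.replicate (k + 1) (0 : ℤ) + Multiset.replicate (k + 1) (1 : ℤ) := by
  simp only [Multiset.replicate_succ, ← Multiset.singleton_add]
  abel

lemma main_aux {a b : List ℕ} (hsum : (a ++ [1]).sum = b.sum)
    (hpath : IsSinglePath (a ++ [1]) b) (s : ℕ) :
    (IsSinglePath (a ++ List.replicate (s + 1) 2) (b ++ List.replicate s 2 ++ [1]) ∧
      spectrum (a ++ List.replicate (s + 1) 2) (b ++ List.replicate s 2 ++ [1])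
        = spectrum (a ++ [1]) b + Multiset.replicate (2 * s + 1) (0 : ℤ) +
            Multiset.replicate (2 * s + 1) (1 : ℤ)) ∧
    (IsSinglePath (a ++ List.replicate (s + 1) 2 ++ [1]) (b ++ List.replicate (s + 1) 2) ∧
      spectrum (a ++ List.replicate (s + 1) 2 ++ [1]) (b ++ List.replicate (s + 1) 2)
        = spectrum (a ++ [1]) b + Multiset.replicate (2 * s + 2) (0 : ℤ) +
            Multiset.replicate (2 * s + 2) (1 : ℤ)) := by
  have hs : a.sum + 1 = b.sum := by simpa using hsum
  induction s with
  | zero =>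
    have h1 := stepTop hsum hpath
    have h2 := stepBot (A := a ++ [2]) (B := b)
      (by simp only [List.sum_append, List.sum_cons, List.sum_nil]; omega) h1.1
    simp only [zero_add, List.replicate_one, List.replicate_zero, List.append_nil]
    refine ⟨⟨h1.1, ?_⟩, h2.1, ?_⟩
    · rw [h1.2, show (2 : ℕ) * 0 + 1 = 0 + 1 from by omega, ← acc_step]
      simp
    · rw [h2.2, h1.2, show (2 : ℕ) * 0 + 2 = 0 + 1 + 1 from by omega, ← acc_step, ← acc_step]
      simp
  | succ s ih =>
    obtain ⟨⟨ih1p, ih1s⟩, ih2p, ih2s⟩ := ih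
    have hsum' : (a ++ List.replicate (s + 1) 2 ++ [1]).sum =
        (b ++ List.replicate (s + 1) 2).sum := by
      simp only [List.sum_append, List.sum_replicate, List.sum_cons, List.sum_nil, smul_eq_mul]
      omega
    have h1 := stepTop hsum' ih2p
    have hl1 : a ++ List.replicate (s + 1 + 1) 2 = a ++ List.replicate (s + 1) 2 ++ [2] := by
      rw [List.replicate_succ' (n := s + 1), ← List.append_assoc]
    have hsum'' : (a ++ List.replicate (s + 1 + 1) 2).sum =
        (b ++ List.replicate (s + 1) 2 ++ [1]).sum := by
      simp only [List.sum_append, List.sum_replicate, List.sum_cons, List.sum_nil, smul_eq_mul]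
      omega
    have h2 := stepBot (A := a ++ List.replicate (s + 1 + 1) 2) (B := b ++ List.replicate (s + 1) 2)
      hsum'' (by rw [hl1]; exact h1.1)
    have hl2 : b ++ List.replicate (s + 1 + 1) 2 = b ++ List.replicate (s + 1) 2 ++ [2] := by
      rw [List.replicate_succ' (n := s + 1), ← List.append_assoc]
    constructor
    · constructor
      · rw [hl1]; exact h1.1
      · rw [show 2 * (s + 1) + 1 = 2 * s + 2 + 1 from by ring, hl1, h1.2, ih2s, acc_step]
    · constructor
      · rw [hl2]; exact h2.1
      · rw [show 2 * (s + 1) + 2 = 2 * s + 2 + 1 + 1 from by ring, hl2, h2.2, hl1, h1.2, ih2s,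
          acc_step, acc_step]

/-- If `g = p^A(a_1|…|a_m|1 / b_1|…|b_t)` is a Frobenius type-A seaweed with spectrum
`S` and `r ≥ 1`, then appending `r` trailing `2`'s as indicated yields Frobenius
type-A seaweeds with spectra `S ∪ {0^{2r-1}, 1^{2r-1}}` and `S ∪ {0^{2r}, 1^{2r}}`
respectively. -/
theorem statement17 (a b : List ℕ) (r : ℕ) (hr : 1 ≤ r)
    (ha : ∀ x ∈ a, 0 < x) (hb : ∀ x ∈ b, 0 < x)
    (hsum : (a ++ [1]).sum = b.sum)
    (hpath : IsSinglePath (a ++ [1]) b) :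
    (IsSinglePath (a ++ List.replicate r 2) (b ++ List.replicate (r - 1) 2 ++ [1]) ∧
      spectrum (a ++ List.replicate r 2) (b ++ List.replicate (r - 1) 2 ++ [1])
        = spectrum (a ++ [1]) b + Multiset.replicate (2 * r - 1) (0 : ℤ) +
            Multiset.replicate (2 * r - 1) (1 : ℤ)) ∧
    (IsSinglePath (a ++ List.replicate r 2 ++ [1]) (b ++ List.replicate r 2) ∧
      spectrum (a ++ List.replicate r 2 ++ [1]) (b ++ List.replicate r 2)
        = spectrum (a ++ [1]) b + Multiset.replicate (2 * r) (0 : ℤ) +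
            Multiset.replicate (2 * r) (1 : ℤ)) := by
  obtain ⟨s, rfl⟩ : ∃ s, r = s + 1 := ⟨r - 1, by omega⟩
  have h := main_aux hsum hpath s
  have e1 : s + 1 - 1 = s := by omega
  have e2 : 2 * (s + 1) - 1 = 2 * s + 1 := by omega
  have e3 : 2 * (s + 1) = 2 * s + 2 := by ring
  rw [e1, e2, e3]
  exact h

end Seaweed
end

section
/- For every integer r ≥ 1, let g_r = p^A(2|…|2|1 / 2r+1) be the Frobenius type-A seaweed whose top composition consists of r parts equal to 2 followed by a 1, and whose bottom composition is the single part 2r+1. Then the multiset { w(P_{i,2r+1}(g_r)) : 1 ≤ i < 2r+1 } equals the multiset in which 2 occurs with multiplicity ⌈r/2⌉, 1 occurs with multiplicity r, and 0 occurs with multiplicity ⌈(r−1)/2⌉. -/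
namespace Seaweed

lemma aux_take_sum (r k : ℕ) (hk : k ≤ r) :
    ((List.replicate r 2 ++ [1]).take k).sum = 2 * k := by
  rw [List.take_append_of_le_length (by simpa using hk), List.take_replicate]
  simp [Nat.min_eq_left hk, Nat.mul_comm]

lemma aux_getD (r k : ℕ) (hk : k < r) :
    (List.replicate r 2 ++ [1]).getD k 0 = 2 := by
  rw [List.getD_append _ _ _ _ (by simpa using hk)]
  simp [List.getD, List.getElem?_replicate, hk]

lemma blockPair_top (r i j : ℕ) :
    blockPair (List.replicate r 2 ++ [1]) i j ↔
      ∃ k, k < r ∧ ((i = 2*k+1 ∧ j = 2*k+2) ∨ (i = 2*k+2 ∧ j = 2*k+1)) := by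
  constructor
  · rintro ⟨k, hk, hi, hj, hsum, hne⟩
    have hlen : (List.replicate r 2 ++ [1]).length = r + 1 := by simp
    rw [hlen] at hk
    rcases Nat.lt_or_ge k r with h | h
    · rw [aux_take_sum r k (le_of_lt h)] at hi hj hsum
      rw [aux_getD r k h] at hsum
      exact ⟨k, h, by omega⟩
    · have hkr : k = r := by omega
      rw [hkr] at hi hj hsum
      rw [aux_take_sum r r le_rfl] at hi hj hsum
      have hg : (List.replicate r 2 ++ [1]).getD r 0 = 1 := by
        rw [List.getD_eq_getElem _ _ (by simp)]
        simp
      rw [hg] at hsum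
      omega
  · rintro ⟨k, hk, h⟩
    have h1 := aux_take_sum r k (le_of_lt hk)
    have h2 := aux_getD r k hk
    exact ⟨k, by simp; omega, by omega, by omega, by omega, by omega⟩

lemma blockPair_bot (r i j : ℕ) :
    blockPair [2*r+1] i j ↔ 0 < i ∧ 0 < j ∧ i + j = 2*r+2 ∧ i ≠ j := by
  constructor
  · rintro ⟨k, hk, hi, hj, hsum, hne⟩
    simp at hk
    subst hk
    simp at hi hj hsum
    exact ⟨hi, hj, by omega, hne⟩
  · rintro ⟨hi, hj, hsum, hne⟩
    exact ⟨0, by simp, by simpa using hi, by simpa using hj, by simp; omega, hne⟩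

lemma adj_dirEdge {a b : List ℕ} {x y : ℕ} (h : (meander a b).Adj x y) :
    dirEdge a b x y ∨ dirEdge a b y x := by
  have hne : x ≠ y := h.ne
  rcases (h : blockPair a x y ∨ blockPair b x y) with hA | hB
  · rcases Nat.lt_or_ge x y with hlt | hge
    · exact Or.inr (Or.inl ⟨blockPair_symm hA, hlt⟩)
    · exact Or.inl (Or.inl ⟨hA, by omega⟩)
  · rcases Nat.lt_or_ge x y with hlt | hge
    · exact Or.inl (Or.inr ⟨hB, hlt⟩)
    · exact Or.inr (Or.inr ⟨blockPair_symm hB, by omega⟩)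

open scoped Classical in
lemma walkWeight_eq (a b : List ℕ) (g : ℕ → ℤ)
    (hg : ∀ x y, dirEdge a b x y → g y = g x + 1) :
    ∀ {i j : ℕ} (w : (meander a b).Walk i j), walkWeight a b w = g j - g i := by
  intro i j w
  induction w with
  | nil => simp [walkWeight]
  | @cons u v x h p ih =>
    have : walkWeight a b (SimpleGraph.Walk.cons h p) =
        (if dirEdge a b u v then (1 : ℤ) else -1) + walkWeight a b p := by
      simp [walkWeight, SimpleGraph.Walk.darts_cons]
    rw [this, ih]
    by_cases hd : dirEdge a b u v
    · rw [if_pos hd]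
      have := hg u v hd
      omega
    · rw [if_neg hd]
      rcases adj_dirEdge h with h1 | h2
      · exact absurd h1 hd
      · have := hg v u h2
        omega

lemma pathWeight_eq (a b : List ℕ) (g : ℕ → ℤ)
    (hg : ∀ x y, dirEdge a b x y → g y = g x + 1)
    {i j : ℕ} (hreach : (meander a b).Reachable i j) :
    pathWeight a b i j = g j - g i := by
  classical
  have h : ∃ p : (meander a b).Walk i j, p.IsPath := by
    obtain ⟨w⟩ := hreach
    exact ⟨w.bypass, w.bypass_isPath⟩
  rw [pathWeight, dif_pos h]
  exact walkWeight_eq a b g hg h.choose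

section Specific

variable (r : ℕ)

/-- potential function -/
def pot (r : ℕ) : ℕ → ℤ := fun i =>
  if i = 2*r+1 then 0
  else if (i-1)/2 < (r+1)/2 then (if i % 2 = 1 then -1 else -2)
  else (if i % 2 = 1 then 0 else -1)

lemma pot_spec (hr : 1 ≤ r) : ∀ x y,
    dirEdge (List.replicate r 2 ++ [1]) [2*r+1] x y → pot r y = pot r x + 1 := by
  intro x y h
  rcases h with ⟨hA, hlt⟩ | ⟨hB, hlt⟩
  · rw [blockPair_top] at hA
    obtain ⟨k, hk, hc⟩ := hA
    rcases hc with ⟨hx, hy⟩ | ⟨hx, hy⟩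
    · omega
    · subst hx hy
      simp only [pot]
      split_ifs <;> omega
  · rw [blockPair_bot] at hB
    obtain ⟨hx, hy, hsum, hne⟩ := hB
    simp only [pot]
    split_ifs <;> omega

lemma adj_top {k : ℕ} (hk : k < r) :
    (meander (List.replicate r 2 ++ [1]) [2*r+1]).Adj (2*k+1) (2*k+2) :=
  (Or.inl ((blockPair_top r _ _).2 ⟨k, hk, Or.inl ⟨rfl, rfl⟩⟩) : blockPair _ _ _ ∨ blockPair _ _ _)

lemma adj_bot {i j : ℕ} (hi : 0 < i) (hj : 0 < j) (hsum : i + j = 2*r+2) (hne : i ≠ j) :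
    (meander (List.replicate r 2 ++ [1]) [2*r+1]).Adj i j :=
  (Or.inr ((blockPair_bot r _ _).2 ⟨hi, hj, hsum, hne⟩) : blockPair _ _ _ ∨ blockPair _ _ _)

lemma reach (hr : 1 ≤ r) : ∀ i, 1 ≤ i → i ≤ 2*r+1 →
    (meander (List.replicate r 2 ++ [1]) [2*r+1]).Reachable i (2*r+1) := by
  intro i
  induction i using Nat.strong_induction_on with
  | _ i ih =>
    intro h1 h2
    by_cases htop : i = 2*r+1
    · subst htop; rfl
    by_cases hbig : r + 1 < i
    · -- bottom edge down
      have hadj := adj_bot r (i := 2*r+2-i) (j := i) (by omega) (by omega) (by omega) (by omega)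
      exact (hadj.reachable.symm).trans (ih (2*r+2-i) (by omega) (by omega) (by omega))
    · by_cases hpar : i % 2 = 0
      · -- even, i ≤ r+1 : top edge to i-1
        have hk : (i-2)/2 < r := by omega
        have hadj := adj_top r hk
        have hi1 : 2*((i-2)/2)+1 = i - 1 := by omega
        have hi2 : 2*((i-2)/2)+2 = i := by omega
        rw [hi1, hi2] at hadj
        exact (hadj.reachable.symm).trans (ih (i-1) (by omega) (by omega) (by omega))
      · -- odd
        by_cases h1' : i = 1
        · subst h1'
          exact (adj_bot r (i := 1) (j := 2*r+1) (by omega) (by omega) (by omega) (by omega)).reachable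
        by_cases hmid : i = r + 1
        · -- r even, i = r+1 odd: i ~ i+1 (top) ~ r (bottom)
          have hk : r/2 < r := by omega
          have hadj1 := adj_top r hk
          have e1 : 2*(r/2)+1 = i := by omega
          have e2 : 2*(r/2)+2 = i+1 := by omega
          rw [e1, e2] at hadj1
          have hadj2 := adj_bot r (i := i+1) (j := r) (by omega) (by omega) (by omega) (by omega)
          exact hadj1.reachable.trans (hadj2.reachable.trans (ih r (by omega) hr (by omega)))
        · -- 3 ≤ i ≤ r, odd : i ~ 2r+2-i (bot) ~ 2r+3-i (top) ~ i-1 (bot)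
          have hir : i ≤ r := by omega
          have hadj1 := adj_bot r (i := i) (j := 2*r+2-i) (by omega) (by omega) (by omega) (by omega)
          have hk : (2*r+1-i)/2 < r := by omega
          have hadj2 := adj_top r hk
          have e1 : 2*((2*r+1-i)/2)+1 = 2*r+2-i := by omega
          have e2 : 2*((2*r+1-i)/2)+2 = 2*r+3-i := by omega
          rw [e1, e2] at hadj2
          have hadj3 := adj_bot r (i := 2*r+3-i) (j := i-1) (by omega) (by omega) (by omega) (by omega)
          exact hadj1.reachable.trans (hadj2.reachable.trans
            (hadj3.reachable.trans (ih (i-1) (by omega) (by omega) (by omega))))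

end Specific

-- multiset helpers

lemma map_range_const (x : ℤ) (f : ℕ → ℤ) : ∀ (r : ℕ), (∀ k < r, f k = x) →
    (Multiset.range r).map f = Multiset.replicate r x := by
  intro r
  induction r with
  | zero => intro _; simp
  | succ n ih =>
    intro h
    rw [Multiset.range_succ, Multiset.map_cons, ih (fun k hk => h k (by omega)),
      h n (by omega), Multiset.replicate_succ]

lemma map_range_ite (x y : ℤ) (c : ℕ) : ∀ (r : ℕ), c ≤ r →
    (Multiset.range r).map (fun k => if k < c then x else y)
      = Multiset.replicate c x + Multiset.replicate (r - c) y := by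
  intro r
  induction r with
  | zero => intro h; interval_cases c; simp
  | succ n ih =>
    intro h
    rcases Nat.lt_or_ge n c with h1 | h1
    · have hc : c = n + 1 := by omega
      subst hc
      rw [map_range_const x _ (n+1) (fun k hk => if_pos hk)]
      simp
    · rw [Multiset.range_succ, Multiset.map_cons, ih h1, if_neg (by omega)]
      have : n + 1 - c = (n - c) + 1 := by omega
      rw [this, Multiset.replicate_succ]
      rw [Multiset.add_cons]

lemma icc_val (n : ℕ) : (Finset.Icc 1 n).val = (Multiset.range n).map (· + 1) := by
  induction n with
  | zero => simp
  | succ n ih =>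
    rw [← Finset.insert_Icc_right_eq_Icc_add_one (by omega),
      Finset.insert_val_of_notMem (by simp), ih, Multiset.range_succ, Multiset.map_cons]

lemma icc_split (r : ℕ) : (Finset.Icc 1 (2*r)).val =
    (Multiset.range r).map (fun k => 2*k+1) + (Multiset.range r).map (fun k => 2*k+2) := by
  induction r with
  | zero => simp
  | succ n ih =>
    have e1 : 2*(n+1) = (2*n+1) + 1 := by ring
    rw [e1, ← Finset.insert_Icc_right_eq_Icc_add_one (by omega),
      Finset.insert_val_of_notMem (by simp),
      ← Finset.insert_Icc_right_eq_Icc_add_one (by omega),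
      Finset.insert_val_of_notMem (by simp), ih]
    rw [Multiset.range_succ, Multiset.map_cons, Multiset.map_cons]
    have e2 : 2*n+1+1 = 2*n+2 := by ring
    rw [e2]
    rw [Multiset.cons_add, Multiset.add_cons, Multiset.cons_swap]

/-- For `r ≥ 1` and `g_r = p^A(2|…|2|1 / 2r+1)` (with `r` parts equal to `2`), the
multiset `{ w(P_{i,2r+1}(g_r)) : 1 ≤ i < 2r+1 }` equals
`{2^{⌈r/2⌉}, 1^r, 0^{⌈(r-1)/2⌉}}`. -/
theorem statement18 (r : ℕ) (hr : 1 ≤ r) :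
    ((Finset.Icc 1 (2 * r)).val.map fun i =>
        pathWeight (List.replicate r 2 ++ [1]) [2 * r + 1] i (2 * r + 1))
      = Multiset.replicate ((r + 1) / 2) (2 : ℤ) + Multiset.replicate r (1 : ℤ) +
          Multiset.replicate (r / 2) (0 : ℤ) := by
  have hpw : ∀ i ∈ Finset.Icc 1 (2*r),
      pathWeight (List.replicate r 2 ++ [1]) [2*r+1] i (2*r+1) = - pot r i := by
    intro i hi
    simp only [Finset.mem_Icc] at hi
    rw [pathWeight_eq _ _ (pot r) (pot_spec r hr) (reach r hr i hi.1 (by omega))]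
    simp [pot]
  have hmap : ((Finset.Icc 1 (2 * r)).val.map fun i =>
      pathWeight (List.replicate r 2 ++ [1]) [2 * r + 1] i (2 * r + 1))
      = (Finset.Icc 1 (2*r)).val.map (fun i => - pot r i) := by
    apply Multiset.map_congr rfl
    intro i hi
    exact hpw i hi
  rw [hmap, icc_split, Multiset.map_add, Multiset.map_map, Multiset.map_map]
  have hodd : (Multiset.range r).map ((fun i => - pot r i) ∘ (fun k => 2*k+1))
      = Multiset.replicate ((r+1)/2) (1 : ℤ) + Multiset.replicate (r - (r+1)/2) (0 : ℤ) := by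
    rw [← map_range_ite 1 0 ((r+1)/2) r (by omega)]
    apply Multiset.map_congr rfl
    intro k hk
    simp only [Multiset.mem_range] at hk
    simp only [Function.comp_apply, pot]
    split_ifs <;> omega
  have heven : (Multiset.range r).map ((fun i => - pot r i) ∘ (fun k => 2*k+2))
      = Multiset.replicate ((r+1)/2) (2 : ℤ) + Multiset.replicate (r - (r+1)/2) (1 : ℤ) := by
    rw [← map_range_ite 2 1 ((r+1)/2) r (by omega)]
    apply Multiset.map_congr rfl
    intro k hk
    simp only [Multiset.mem_range] at hk
    simp only [Function.comp_apply, pot]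
    split_ifs <;> omega
  rw [hodd, heven]
  have e1 : r - (r+1)/2 = r/2 := by omega
  have e3 : Multiset.replicate r (1 : ℤ)
      = Multiset.replicate ((r+1)/2) 1 + Multiset.replicate (r/2) 1 := by
    rw [← Multiset.replicate_add]
    congr 1
    omega
  rw [e1, e3]
  abel

end Seaweed
end
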